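/- arXiv:2210.16808 — 3 statements merged into one kernel-verified Lean document; each statement's English description precedes it below -/
import Mathlib

section
/- There exists a constant C > 0 such that the following holds for every τ ≥ 2. Let ξ_1, …, ξ_n be i.i.d. real random variables with E ξ_1² ≤ 1 and Pr(|ξ_1| ≥ t) ≤ t^{−τ} for all t > 0, and set μ_i := (C/√n)·(n/i)^{1/τ} for i = 1, …, n. Then for every 1 ≤ i ≤ n, E( |ξ|_(i)/(√n·μ_i) ) ≤ 1/10, where |ξ|_(i) denotes the i-th largest value among |ξ_1|, …, |ξ_n|. -/
open MeasureTheory ProbabilityTheory Matrix Finset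
open scoped ENNReal NNReal

noncomputable section

namespace Paper

/-- The `i`-th largest (0-indexed) absolute value of the coordinates of `v`. -/
def ordAbs {m : ℕ} (v : Fin m → ℝ) (i : Fin m) : ℝ :=
  |v (Tuple.sort (fun j => |v j|) i.rev)|

/-- Sorted ℓ¹ norm with weight sequence `γ`. -/
def snorm {m : ℕ} (γ : Fin m → ℝ) (v : Fin m → ℝ) : ℝ :=
  ∑ i, γ i * ordAbs v i

/-- Squared Euclidean norm. -/
def sq2 {m : ℕ} (v : Fin m → ℝ) : ℝ := ∑ i, (v i) ^ 2

/-- Squared `Σ`-norm `⟨Σ u, u⟩`. -/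
def sqS {p : ℕ} (S : Matrix (Fin p) (Fin p) ℝ) (u : Fin p → ℝ) : ℝ :=
  u ⬝ᵥ S.mulVec u

/-- Number of nonzero coordinates of a vector. -/
def spars {m : ℕ} (v : Fin m → ℝ) : ℕ := {i | v i ≠ 0}.ncard

/-- Slope weights `λ_i = C √(log(e·m/i)/n)`, `i = 1, …, m` (here `i : Fin m` is 0-indexed). -/
def lamW (C : ℝ) (n m : ℕ) (i : Fin m) : ℝ :=
  C * Real.sqrt (Real.log (Real.exp 1 * m / ((i : ℕ) + 1)) / n)

/-- Sum of the squares of the `s` largest weights: `Σ_{i=1}^s γ_i²`. -/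
def headSum {m : ℕ} (s : ℕ) (γ : Fin m → ℝ) : ℝ :=
  ∑ i ∈ Finset.univ.filter (fun i : Fin m => (i : ℕ) < s), (γ i) ^ 2

/-- Restricted eigenvalue condition: `‖u‖_Σ² ≥ κ ‖u‖₂²` on the cone `C(s,4)`. -/
def RE {p : ℕ} (S : Matrix (Fin p) (Fin p) ℝ) (lam : Fin p → ℝ) (s : ℕ) (κ : ℝ) : Prop :=
  ∀ u : Fin p → ℝ,
    snorm lam u ≤ 4 * Real.sqrt (headSum s lam) * Real.sqrt (sq2 u) →
    κ * sq2 u ≤ sqS S u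

/-- The square-root Slope loss
`L(β,θ) = (‖Y − Xβ − √n θ‖₂²/(2n))^{1/2} + ‖β‖_λ + ‖θ‖_μ`. -/
def loss {n p : ℕ} (Y : Fin n → ℝ) (X : Matrix (Fin n) (Fin p) ℝ)
    (lam : Fin p → ℝ) (mu : Fin n → ℝ) (β : Fin p → ℝ) (θ : Fin n → ℝ) : ℝ :=
  Real.sqrt (sq2 (fun i => Y i - X.mulVec β i - Real.sqrt n * θ i) / (2 * n)) +
    snorm lam β + snorm mu θ

/-- The rows of `Z` are i.i.d. centered isotropic 1-sub-Gaussian random vectors. -/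
def SubGaussianDesign {Ω : Type} [MeasurableSpace Ω] (μ : Measure Ω)
    (n p : ℕ) (Z : Ω → Fin n → Fin p → ℝ) : Prop :=
  (∀ i, Measurable fun ω => Z ω i) ∧
  iIndepFun (fun i ω => Z ω i) μ ∧
  (∀ i j, IdentDistrib (fun ω => Z ω i) (fun ω => Z ω j) μ μ) ∧
  (∀ i j, ∫ ω, Z ω i j ∂μ = 0) ∧
  (∀ i j k, ∫ ω, Z ω i j * Z ω i k ∂μ = if j = k then (1 : ℝ) else 0) ∧
  (∀ i (v : Fin p → ℝ),
    ∫ ω, Real.exp (∑ j, v j * Z ω i j) ∂μ ≤ Real.exp (sq2 v / 2))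

/-- The coordinates of `ξ` are i.i.d. -/
def IIDCoords {Ω : Type} [MeasurableSpace Ω] (μ : Measure Ω)
    (n : ℕ) (ξ : Ω → Fin n → ℝ) : Prop :=
  (∀ i, Measurable fun ω => ξ ω i) ∧
  iIndepFun (fun i ω => ξ ω i) μ ∧
  (∀ i j, IdentDistrib (fun ω => ξ ω i) (fun ω => ξ ω j) μ μ)

/-- The design matrix `X = Z Σ^{1/2}` built from the rows `Z` and a square root `Rt` of `Σ`. -/
def designX {n p : ℕ} (Z : Fin n → Fin p → ℝ) (Rt : Matrix (Fin p) (Fin p) ℝ) :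
    Matrix (Fin n) (Fin p) ℝ :=
  Matrix.of Z * Rt

end Paper

section Aux

/-- Deterministic bound: the `i`-th largest absolute value is at most
`a` plus the average excess over `a` of the top `i+1` values. -/
lemma aux_ordAbs_le {m : ℕ} (v : Fin m → ℝ) (i : Fin m) (a : ℝ) :
    Paper.ordAbs v i ≤ a + (∑ j, max (|v j| - a) 0) / (((i : ℕ) : ℝ) + 1) := by
  classical
  set f : Fin m → ℝ := fun j => |v j| with hf
  have hmono : Monotone (f ∘ Tuple.sort f) := Tuple.monotone_sort f
  set σ := Tuple.sort f with hσ
  have hb : Paper.ordAbs v i = f (σ i.rev) := rfl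
  set b := f (σ i.rev) with hbdef
  set S := ∑ j, max (|v j| - a) 0 with hS
  have hsum : S = ∑ l, max (f (σ l) - a) 0 := by
    rw [hS]
    exact (Equiv.sum_comp σ (fun j => max (f j - a) 0)).symm
  have hrev : (i.rev : ℕ) = m - ((i : ℕ) + 1) := rfl
  have hcard : (Finset.Ici i.rev).card = (i : ℕ) + 1 := by
    rw [Fin.card_Ici, hrev]
    have h2 : (i : ℕ) < m := i.isLt
    omega
  have hterm : ∀ l ∈ Finset.Ici i.rev, b - a ≤ max (f (σ l) - a) 0 := by
    intro l hl
    have hbl : b ≤ f (σ l) := hmono (Finset.mem_Ici.mp hl)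
    calc b - a ≤ f (σ l) - a := by linarith
      _ ≤ max (f (σ l) - a) 0 := le_max_left _ _
  have hmain : (((i : ℕ) : ℝ) + 1) * (b - a) ≤ S := by
    have h1 := Finset.card_nsmul_le_sum (Finset.Ici i.rev)
      (fun l => max (f (σ l) - a) 0) (b - a) hterm
    rw [hcard] at h1
    have h2 : ∑ l ∈ Finset.Ici i.rev, max (f (σ l) - a) 0 ≤ ∑ l, max (f (σ l) - a) 0 :=
      Finset.sum_le_sum_of_subset_of_nonneg (Finset.subset_univ _)
        (fun j _ _ => le_max_right _ _)
    rw [hsum]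
    calc (((i : ℕ) : ℝ) + 1) * (b - a) = ((i : ℕ) + 1 : ℕ) • (b - a) := by
          rw [nsmul_eq_mul]; push_cast; ring
      _ ≤ _ := le_trans h1 h2
  have hk : (0:ℝ) < ((i : ℕ) : ℝ) + 1 := by positivity
  rw [hb]
  have hdiv : b - a ≤ S / (((i : ℕ) : ℝ) + 1) := by
    rw [le_div_iff₀ hk]; nlinarith
  linarith

/-- Tail expectation bound for a heavy-tailed random variable. -/
lemma aux_tail {Ω : Type} [MeasurableSpace Ω] (μ : Measure Ω) [IsProbabilityMeasure μ]
    {X : Ω → ℝ} (hX : Measurable X) {τ a : ℝ} (hτ : 2 ≤ τ) (ha : 0 < a)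
    (htail : ∀ t : ℝ, 0 < t → μ {ω | t ≤ |X ω|} ≤ ENNReal.ofReal (t ^ (-τ))) :
    Integrable (fun ω => max (|X ω| - a) 0) μ ∧
      ∫ ω, max (|X ω| - a) 0 ∂μ ≤ a ^ (1 - τ) / (τ - 1) := by
  have hτ1 : (1:ℝ) < τ := by linarith
  set g : Ω → ℝ := fun ω => max (|X ω| - a) 0 with hg
  have hgm : Measurable g := (hX.abs.sub measurable_const).max measurable_const
  have hgnn : ∀ ω, 0 ≤ g ω := fun ω => le_max_right _ _
  have hlc : ∫⁻ ω, ENNReal.ofReal (g ω) ∂μ = ∫⁻ t in Set.Ioi (0:ℝ), μ {ω | t ≤ g ω} :=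
    lintegral_eq_lintegral_meas_le μ (Filter.Eventually.of_forall hgnn) hgm.aemeasurable
  have hset : ∀ t : ℝ, 0 < t → μ {ω | t ≤ g ω} ≤ ENNReal.ofReal ((a + t) ^ (-τ)) := by
    intro t ht
    have hseteq : {ω | t ≤ g ω} = {ω | a + t ≤ |X ω|} := by
      ext ω
      simp only [hg, Set.mem_setOf_eq, le_max_iff]
      constructor
      · rintro (h | h)
        · linarith
        · linarith
      · intro h; left; linarith
    rw [hseteq]
    exact htail (a + t) (by linarith)
  have hioi : ∫⁻ t in Set.Ioi (0:ℝ), μ {ω | t ≤ g ω}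
      ≤ ∫⁻ t in Set.Ioi (0:ℝ), ENNReal.ofReal ((a + t) ^ (-τ)) := by
    refine lintegral_mono_ae ?_
    filter_upwards [ae_restrict_mem measurableSet_Ioi] with t ht
    exact hset t ht
  have htrans : ∫⁻ t in Set.Ioi (0:ℝ), ENNReal.ofReal ((a + t) ^ (-τ))
      = ∫⁻ s in Set.Ioi a, ENNReal.ofReal (s ^ (-τ)) := by
    have h1 : MeasurePreserving (fun x : ℝ => a + x) volume volume :=
      measurePreserving_add_left volume a
    have h2 : MeasurableEmbedding (fun x : ℝ => a + x) :=
      (MeasurableEquiv.addLeft a).measurableEmbedding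
    have h3 : (fun x : ℝ => a + x) ⁻¹' Set.Ioi a = Set.Ioi 0 := by
      ext x
      simp [lt_add_iff_pos_right]
    rw [← h3]
    exact h1.setLIntegral_comp_preimage_emb h2 (fun s => ENNReal.ofReal (s ^ (-τ))) (Set.Ioi a)
  have hint : IntegrableOn (fun s : ℝ => s ^ (-τ)) (Set.Ioi a) :=
    integrableOn_Ioi_rpow_of_lt (by linarith) ha
  have hval : ∫ s in Set.Ioi a, s ^ (-τ) = a ^ (1 - τ) / (τ - 1) := by
    rw [integral_Ioi_rpow_of_lt (by linarith : -τ < -1) ha,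
      show -τ + 1 = 1 - τ by ring,
      div_eq_div_iff (by linarith : (1:ℝ) - τ < 0).ne (by linarith : (0:ℝ) < τ - 1).ne']
    ring
  have hofReal : ∫⁻ s in Set.Ioi a, ENNReal.ofReal (s ^ (-τ))
      = ENNReal.ofReal (a ^ (1 - τ) / (τ - 1)) := by
    rw [← ofReal_integral_eq_lintegral_ofReal hint ?_, hval]
    filter_upwards [ae_restrict_mem measurableSet_Ioi] with s hs
    exact Real.rpow_nonneg (le_of_lt (lt_trans ha hs)) _
  have hB : 0 ≤ a ^ (1 - τ) / (τ - 1) := div_nonneg (Real.rpow_nonneg ha.le _) (by linarith)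
  have hfin : ∫⁻ ω, ENNReal.ofReal (g ω) ∂μ ≤ ENNReal.ofReal (a ^ (1 - τ) / (τ - 1)) := by
    rw [hlc]
    exact hioi.trans (le_of_eq (htrans.trans hofReal))
  have hInt : Integrable g μ := by
    refine ⟨hgm.aestronglyMeasurable, ?_⟩
    rw [hasFiniteIntegral_iff_ofReal (Filter.Eventually.of_forall hgnn)]
    exact lt_of_le_of_lt hfin ENNReal.ofReal_lt_top
  refine ⟨hInt, ?_⟩
  rw [integral_eq_lintegral_of_nonneg_ae (Filter.Eventually.of_forall hgnn)
    hgm.aestronglyMeasurable]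
  exact ENNReal.toReal_le_of_le_ofReal hB hfin

end Aux

/-- expectation bound for order statistics of heavy-tailed i.i.d.
variables; `i : Fin n` is 0-indexed, its 1-index is `(i : ℕ) + 1`, and
`μ_i = (C/√n)·(n/i)^{1/τ}`. -/
theorem statement_10 :
    ∃ C : ℝ, 0 < C ∧
      ∀ (τ : ℝ), 2 ≤ τ →
      ∀ (n : ℕ) (Ω : Type) (_ : MeasurableSpace Ω) (μ : Measure Ω)
        (_ : IsProbabilityMeasure μ) (ξ : Ω → Fin n → ℝ),
        Paper.IIDCoords μ n ξ →
        (∀ i, ∫ ω, (ξ ω i) ^ 2 ∂μ ≤ 1) →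
        (∀ i (t : ℝ), 0 < t → μ {ω | t ≤ |ξ ω i|} ≤ ENNReal.ofReal (t ^ (-τ))) →
        ∀ i : Fin n,
          ∫ ω, Paper.ordAbs (ξ ω) i /
              (Real.sqrt n *
                (C / Real.sqrt n * ((n : ℝ) / ((i : ℕ) + 1)) ^ ((1 : ℝ) / τ))) ∂μ ≤
            1 / 10 := by
  refine ⟨20, by norm_num, ?_⟩
  intro τ hτ n Ω _ μ _ ξ hiid hsq htail i
  have hτ0 : (0:ℝ) < τ := by linarith
  have hn : 0 < n := i.pos
  have hk0 : (0:ℝ) < ((i : ℕ) : ℝ) + 1 := by positivity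
  have hkn : ((i : ℕ) : ℝ) + 1 ≤ (n : ℝ) := by
    exact_mod_cast Nat.succ_le_of_lt i.isLt
  have hx1 : (1:ℝ) ≤ (n : ℝ) / (((i : ℕ) : ℝ) + 1) := (one_le_div hk0).mpr hkn
  set a : ℝ := ((n : ℝ) / (((i : ℕ) : ℝ) + 1)) ^ ((1:ℝ)/τ) with hadef
  have ha1 : 1 ≤ a := Real.one_le_rpow hx1 (by positivity)
  have ha0 : (0:ℝ) < a := lt_of_lt_of_le one_pos ha1
  have haτ : a ^ τ = (n : ℝ) / (((i : ℕ) : ℝ) + 1) := by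
    rw [hadef, ← Real.rpow_mul (by positivity), one_div,
      inv_mul_cancel₀ (ne_of_gt hτ0), Real.rpow_one]
  have hco : ∀ j : Fin n, Integrable (fun ω => max (|ξ ω j| - a) 0) μ ∧
      ∫ ω, max (|ξ ω j| - a) 0 ∂μ ≤ a ^ (1 - τ) / (τ - 1) :=
    fun j => aux_tail μ (hiid.1 j) hτ ha0 (fun t ht => htail j t ht)
  set g' : Ω → ℝ := fun ω => a + (∑ j, max (|ξ ω j| - a) 0) / (((i : ℕ) : ℝ) + 1) with hg'
  have hsumInt : Integrable (fun ω => ∑ j, max (|ξ ω j| - a) 0) μ :=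
    integrable_finset_sum _ (fun j _ => (hco j).1)
  have hgi : Integrable g' μ := (integrable_const a).add (hsumInt.div_const _)
  have hgval : ∫ ω, g' ω ∂μ ≤ 2 * a := by
    have h1 : ∫ ω, g' ω ∂μ
        = a + (∑ j, ∫ ω, max (|ξ ω j| - a) 0 ∂μ) / (((i : ℕ) : ℝ) + 1) := by
      rw [hg', integral_add (integrable_const a) (hsumInt.div_const _), integral_const,
        probReal_univ, one_smul, integral_div,
        integral_finset_sum _ (fun j _ => (hco j).1)]
    have h2 : ∑ j : Fin n, ∫ ω, max (|ξ ω j| - a) 0 ∂μ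
        ≤ (n : ℝ) * (a ^ (1 - τ) / (τ - 1)) := by
      calc ∑ j : Fin n, ∫ ω, max (|ξ ω j| - a) 0 ∂μ
          ≤ ∑ _j : Fin n, a ^ (1 - τ) / (τ - 1) := Finset.sum_le_sum fun j _ => (hco j).2
        _ = (n : ℝ) * (a ^ (1 - τ) / (τ - 1)) := by
            rw [Finset.sum_const, Finset.card_univ, Fintype.card_fin, nsmul_eq_mul]
    have h3 : (n : ℝ) * (a ^ (1 - τ) / (τ - 1)) / (((i : ℕ) : ℝ) + 1) = a / (τ - 1) := by
      rw [show (n:ℝ) * (a ^ (1-τ)/(τ-1)) / (((i : ℕ) : ℝ) + 1)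
          = ((n:ℝ)/(((i : ℕ) : ℝ) + 1)) * a^(1-τ) / (τ-1) by ring, ← haτ,
        ← Real.rpow_add ha0, show τ + (1-τ) = 1 by ring, Real.rpow_one]
    have h4 : a / (τ - 1) ≤ a := by
      rw [div_le_iff₀ (by linarith)]
      nlinarith
    have h5 : (∑ j : Fin n, ∫ ω, max (|ξ ω j| - a) 0 ∂μ) / (((i : ℕ) : ℝ) + 1)
        ≤ a / (τ - 1) := by
      rw [← h3]
      exact div_le_div_of_nonneg_right h2 hk0.le
    rw [h1]; linarith
  have hord : ∀ ω, Paper.ordAbs (ξ ω) i ≤ g' ω := fun ω => aux_ordAbs_le (ξ ω) i a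
  have hordnn : ∀ ω, 0 ≤ Paper.ordAbs (ξ ω) i := fun ω => abs_nonneg _
  have hIord : ∫ ω, Paper.ordAbs (ξ ω) i ∂μ ≤ 2 * a :=
    le_trans (integral_mono_of_nonneg (Filter.Eventually.of_forall hordnn) hgi
      (Filter.Eventually.of_forall hord)) hgval
  have hs : Real.sqrt n ≠ 0 := by
    have : (0:ℝ) < n := by exact_mod_cast hn
    positivity
  have hden : Real.sqrt n * (20 / Real.sqrt n * ((n : ℝ) / (((i : ℕ) : ℝ) + 1)) ^ ((1:ℝ)/τ))
      = 20 * a := by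
    rw [← hadef]; field_simp
  calc ∫ ω, Paper.ordAbs (ξ ω) i /
        (Real.sqrt n * (20 / Real.sqrt n * ((n : ℝ) / (((i : ℕ) : ℝ) + 1)) ^ ((1:ℝ)/τ))) ∂μ
      = ∫ ω, Paper.ordAbs (ξ ω) i / (20 * a) ∂μ := by rw [hden]
    _ = (∫ ω, Paper.ordAbs (ξ ω) i ∂μ) / (20 * a) := integral_div _ _
    _ ≤ (2 * a) / (20 * a) := by gcongr
    _ = 1 / 10 := by
        rw [div_eq_div_iff (by positivity) (by norm_num : (10:ℝ) ≠ 0)]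
        ring

end
end

section
/- Let γ_1 ≥ γ_2 ≥ … ≥ γ_m > 0 be a nonincreasing sequence of positive reals. Then for all vectors w, u ∈ ℝ^m: |⟨w, u⟩| ≤ ( max_{1 ≤ i ≤ m} |w|_(i)/γ_i ) · ‖u‖_γ, where |w|_(i) denotes the i-th largest value among |w_1|, …, |w_m| and ‖u‖_γ := Σ_{i=1}^m γ_i |u|_(i) is the sorted ℓ1 norm. -/
open MeasureTheory ProbabilityTheory Matrix Finset
open scoped ENNReal NNReal

noncomputable section

lemma rearrange_aux (m : ℕ) (w u : Fin m → ℝ) :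
    ∑ i, |w i| * |u i| ≤ ∑ i, Paper.ordAbs w i * Paper.ordAbs u i := by
  set σ := Tuple.sort (fun j => |w j|) with hσ
  set τ := Tuple.sort (fun j => |u j|) with hτ
  have ha : Monotone ((fun j => |w j|) ∘ σ) := Tuple.monotone_sort _
  have hb : Monotone ((fun j => |u j|) ∘ τ) := Tuple.monotone_sort _
  have hmono : Monovary ((fun j => |w j|) ∘ σ) ((fun j => |u j|) ∘ τ) :=
    ha.monovary hb
  have key := hmono.sum_smul_comp_perm_le_sum_smul (σ := σ.trans τ.symm)
  simp only [smul_eq_mul, Function.comp] at key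
  calc ∑ i, |w i| * |u i|
      = ∑ j, |w (σ j)| * |u (σ j)| := (Equiv.sum_comp σ fun i => |w i| * |u i|).symm
    _ = ∑ j, |w (σ j)| * |u (τ ((σ.trans τ.symm) j))| := by
        simp [Equiv.trans]
    _ ≤ ∑ j, |w (σ j)| * |u (τ j)| := key
    _ = ∑ i, Paper.ordAbs w i * Paper.ordAbs u i := by
        rw [← Equiv.sum_comp (Fin.revPerm) (fun j => |w (σ j)| * |u (τ j)|)]
        rfl

/-- dual inequality for the sorted ℓ¹ norm. -/
theorem statement_15 (m : ℕ) (hm : 0 < m) (γ : Fin m → ℝ)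
    (hpos : ∀ i, 0 < γ i) (hdec : Antitone γ) (w u : Fin m → ℝ) :
    |∑ i, w i * u i| ≤ (⨆ i : Fin m, Paper.ordAbs w i / γ i) * Paper.snorm γ u := by
  set M := ⨆ i : Fin m, Paper.ordAbs w i / γ i with hM
  have hMle : ∀ i, Paper.ordAbs w i ≤ M * γ i := by
    intro i
    have h1 : Paper.ordAbs w i / γ i ≤ M :=
      le_ciSup (f := fun i => Paper.ordAbs w i / γ i) (Set.Finite.bddAbove (Set.finite_range _)) i
    exact (div_le_iff₀ (hpos i)).mp h1
  calc |∑ i, w i * u i| ≤ ∑ i, |w i * u i| := Finset.abs_sum_le_sum_abs _ _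
    _ = ∑ i, |w i| * |u i| := by simp [abs_mul]
    _ ≤ ∑ i, Paper.ordAbs w i * Paper.ordAbs u i := rearrange_aux m w u
    _ ≤ ∑ i, (M * γ i) * Paper.ordAbs u i := by
        apply Finset.sum_le_sum
        intro i _
        exact mul_le_mul_of_nonneg_right (hMle i) (abs_nonneg _)
    _ = M * Paper.snorm γ u := by
        simp [Paper.snorm, Finset.mul_sum, mul_assoc]

end
end

section
/- Let C₀ > 0, let λ_i := C₀√(log(ep/i)/n) for i = 1, …, p, and let A := { u ∈ ℝ^p : ‖u‖_Σ² ≥ ‖u‖_λ²/2 }, where Σ ∈ ℝ^{p×p} is positive semidefinite with diagonal entries Σ_ii ≤ 1. Let ξ be a centered Gaussian vector in ℝ^p with covariance matrix Σ. Then (1/√n) · E[ sup_{u ∈ A, u ≠ 0} ⟨ξ, u⟩ / ‖u‖_Σ ] ≤ 20√2 / C₀. -/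
open MeasureTheory ProbabilityTheory Matrix Finset
open scoped ENNReal NNReal

noncomputable section

namespace S18
variable {p : ℕ}

def permOf (v : Fin p → ℝ) : Equiv.Perm (Fin p) :=
  (Fin.revPerm).trans (Tuple.sort (fun j => |v j|))

lemma ordAbs_eq (v : Fin p → ℝ) (i : Fin p) : Paper.ordAbs v i = |v (permOf v i)| := rfl

lemma ordAbs_nonneg (v : Fin p → ℝ) (i : Fin p) : 0 ≤ Paper.ordAbs v i := abs_nonneg _

lemma ordAbs_antitone (v : Fin p → ℝ) : Antitone (Paper.ordAbs v) := by
  intro i j hij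
  exact Tuple.monotone_sort (fun j => |v j|) (Fin.rev_le_rev.mpr hij)

lemma sum_comp_permOf (v : Fin p → ℝ) (F : Fin p → ℝ) :
    ∑ i, F (permOf v i) = ∑ m, F m := Equiv.sum_comp _ F

lemma ordAbs_neg (u : Fin p → ℝ) : Paper.ordAbs (-u) = Paper.ordAbs u := by
  funext i
  have h : (fun j => |(-u) j|) = fun j => |u j| := by
    funext j; simp
  unfold Paper.ordAbs
  rw [h]
  simp

lemma sum_abs_mul_abs_le (v w : Fin p → ℝ) :
    ∑ m, |v m| * |w m| ≤ ∑ i, Paper.ordAbs v i * Paper.ordAbs w i := by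
  have hmono : Monovary (Paper.ordAbs v) (Paper.ordAbs w) := by
    intro i j h
    rcases le_or_gt j i with hji | hij
    · exact ordAbs_antitone v hji
    · exact absurd h (not_lt.mpr (ordAbs_antitone w hij.le))
  have key := hmono.sum_smul_comp_perm_le_sum_smul (σ := (permOf v).trans (permOf w).symm)
  simp only [smul_eq_mul, Equiv.trans_apply, Equiv.apply_symm_apply] at key
  calc ∑ m, |v m| * |w m| = ∑ i, |v (permOf v i)| * |w (permOf v i)| :=
        (sum_comp_permOf v fun m => |v m| * |w m|).symm
    _ = ∑ i, Paper.ordAbs v i * Paper.ordAbs w ((permOf w).symm (permOf v i)) := by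
        refine Finset.sum_congr rfl fun i _ => ?_
        rw [ordAbs_eq, ordAbs_eq, Equiv.apply_symm_apply]
    _ ≤ ∑ i, Paper.ordAbs v i * Paper.ordAbs w i := key

lemma gaussianPDFReal_mul_exp (m : ℝ) (v : ℝ≥0) (hv : v ≠ 0) (t x : ℝ) :
    gaussianPDFReal m v x * Real.exp (t * x) =
      Real.exp (t * m + (v : ℝ) * t ^ 2 / 2) * gaussianPDFReal (m + t * v) v x := by
  have hv' : (v : ℝ) ≠ 0 := by exact_mod_cast hv
  have h : -(x - m) ^ 2 / (2 * (v:ℝ)) + t * x =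
      (t * m + (v:ℝ) * t ^ 2 / 2) + -(x - (m + t * v)) ^ 2 / (2 * (v:ℝ)) := by
    field_simp
    ring
  unfold gaussianPDFReal
  rw [mul_assoc, ← Real.exp_add, h, Real.exp_add]
  ring

lemma exp_measurable (t : ℝ) : Measurable (fun x : ℝ => Real.exp (t * x)) :=
  (Real.continuous_exp.comp (continuous_const.mul continuous_id)).measurable

lemma gaussianReal_as_withDensity (m : ℝ) (v : ℝ≥0) (hv : v ≠ 0) :
    gaussianReal m v =
      volume.withDensity (fun x => ((Real.toNNReal (gaussianPDFReal m v x) : ℝ≥0) : ℝ≥0∞)) := by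
  rw [gaussianReal_of_var_ne_zero _ hv]
  rfl

lemma pdf_smul_eq (m : ℝ) (v : ℝ≥0) (hv : v ≠ 0) (t : ℝ) :
    (fun x => (Real.toNNReal (gaussianPDFReal m v x) : ℝ≥0) • Real.exp (t * x)) =
      fun x => Real.exp (t * m + (v : ℝ) * t ^ 2 / 2) * gaussianPDFReal (m + t * v) v x := by
  funext x
  rw [NNReal.smul_def, smul_eq_mul, Real.coe_toNNReal _ (gaussianPDFReal_nonneg _ _ _)]
  exact gaussianPDFReal_mul_exp m v hv t x

lemma integrable_exp_gaussianReal (m : ℝ) (v : ℝ≥0) (t : ℝ) :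
    Integrable (fun x => Real.exp (t * x)) (gaussianReal m v) := by
  by_cases hv : v = 0
  · subst hv
    rw [gaussianReal_zero_var]
    exact (integrable_const (Real.exp (t * m))).congr
      (MeasureTheory.ae_eq_dirac' (exp_measurable t)).symm
  · rw [gaussianReal_as_withDensity m v hv]
    rw [integrable_withDensity_iff_integrable_smul
      ((measurable_gaussianPDFReal m v).real_toNNReal)]
    rw [pdf_smul_eq m v hv t]
    exact (integrable_gaussianPDFReal _ _).const_mul _

lemma integral_exp_gaussianReal (m : ℝ) (v : ℝ≥0) (t : ℝ) :
    ∫ x, Real.exp (t * x) ∂(gaussianReal m v) = Real.exp (t * m + (v : ℝ) * t ^ 2 / 2) := by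
  by_cases hv : v = 0
  · subst hv
    rw [gaussianReal_zero_var, integral_dirac]
    simp
  · rw [gaussianReal_as_withDensity m v hv,
      integral_withDensity_eq_integral_smul ((measurable_gaussianPDFReal m v).real_toNNReal)]
    rw [pdf_smul_eq m v hv t]
    rw [integral_const_mul, integral_gaussianPDFReal_eq_one _ hv, mul_one]

lemma sqS_single (S : Matrix (Fin p) (Fin p) ℝ) (m : Fin p) :
    Paper.sqS S (Pi.single m 1) = S m m := by
  simp [Paper.sqS, Matrix.mulVec, dotProduct, Pi.single_apply, ite_mul, mul_ite]

lemma sum_single_mul {Ω : Type} (ξ : Ω → Fin p → ℝ) (m : Fin p) :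
    (fun ω => ∑ i, (Pi.single m 1 : Fin p → ℝ) i * ξ ω i) = fun ω => ξ ω m := by
  funext ω
  simp [Pi.single_apply, ite_mul]

lemma xi_exp (S : Matrix (Fin p) (Fin p) ℝ) (hdiag : ∀ i, S i i ≤ 1)
    {Ω : Type} [MeasurableSpace Ω] (μ : Measure Ω)
    (ξ : Ω → Fin p → ℝ) (hmeas : Measurable ξ)
    (hgauss : ∀ v : Fin p → ℝ,
      Measure.map (fun ω => ∑ i, v i * ξ ω i) μ =
        gaussianReal 0 (Real.toNNReal (Paper.sqS S v)))
    (m : Fin p) (t : ℝ) :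
    Integrable (fun ω => Real.exp (t * ξ ω m)) μ ∧
      ∫ ω, Real.exp (t * ξ ω m) ∂μ ≤ Real.exp (t ^ 2 / 2) := by
  have hmap : Measure.map (fun ω => ξ ω m) μ
      = gaussianReal 0 (Real.toNNReal (S m m)) := by
    have h := hgauss (Pi.single m 1)
    rwa [sum_single_mul ξ m, sqS_single S m] at h
  have hmm : Measurable fun ω => ξ ω m := (measurable_pi_apply m).comp hmeas
  have hInt : Integrable (fun ω => Real.exp (t * ξ ω m)) μ := by
    have h1 : Integrable (fun x => Real.exp (t * x))
        (Measure.map (fun ω => ξ ω m) μ) := by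
      rw [hmap]; exact integrable_exp_gaussianReal _ _ t
    exact (integrable_map_measure
      (exp_measurable t).aemeasurable.aestronglyMeasurable hmm.aemeasurable).mp h1
  refine ⟨hInt, ?_⟩
  have h2 : ∫ ω, Real.exp (t * ξ ω m) ∂μ
      = ∫ x, Real.exp (t * x) ∂(gaussianReal 0 (Real.toNNReal (S m m))) := by
    rw [← hmap, integral_map hmm.aemeasurable
      (exp_measurable t).aemeasurable.aestronglyMeasurable]
  rw [h2, integral_exp_gaussianReal]
  have hv1 : ((Real.toNNReal (S m m)) : ℝ) ≤ 1 := by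
    rw [Real.coe_toNNReal']
    exact max_le (hdiag m) zero_le_one
  have hv0 : (0:ℝ) ≤ ((Real.toNNReal (S m m)) : ℝ) := NNReal.coe_nonneg _
  have h3 : t * 0 + ((Real.toNNReal (S m m)) : ℝ) * t ^ 2 / 2 ≤ t ^ 2 / 2 := by
    nlinarith [sq_nonneg t]
  exact Real.exp_le_exp.mpr h3

lemma le_exp_div {x β : ℝ} (hβ : 0 < β) : x ≤ Real.exp (β * x - 1) / β := by
  rw [le_div_iff₀ hβ]
  have h := Real.add_one_le_exp (β * x - 1)
  linarith

lemma sqrt_four : Real.sqrt 4 = 2 := by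
  rw [show (4:ℝ) = 2 ^ 2 by norm_num, Real.sqrt_sq (by norm_num : (0:ℝ) ≤ 2)]

end S18

set_option maxHeartbeats 1000000 in
/-- Gaussian mean width bound for the cone
`A = {u : ‖u‖_Σ² ≥ ‖u‖_λ²/2}` with weights `λ_i = C₀√(log(ep/i)/n)`. -/
theorem statement_18 (n p : ℕ) (hn : 0 < n) (hp : 0 < p) (C₀ : ℝ) (hC₀ : 0 < C₀)
    (S : Matrix (Fin p) (Fin p) ℝ) (hS : S.PosSemidef) (hdiag : ∀ i, S i i ≤ 1)
    (Ω : Type) [MeasurableSpace Ω] (μ : Measure Ω) [IsProbabilityMeasure μ]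
    (ξ : Ω → Fin p → ℝ) (hmeas : Measurable ξ)
    (hgauss : ∀ v : Fin p → ℝ,
      Measure.map (fun ω => ∑ i, v i * ξ ω i) μ =
        gaussianReal 0 (Real.toNNReal (Paper.sqS S v))) :
    (1 / Real.sqrt n) *
        ∫ ω, sSup
          ((fun u : Fin p → ℝ => (∑ i, ξ ω i * u i) / Real.sqrt (Paper.sqS S u)) ''
            {u | u ≠ 0 ∧ (Paper.snorm (Paper.lamW C₀ n p) u) ^ 2 / 2 ≤ Paper.sqS S u}) ∂μ ≤
      20 * Real.sqrt 2 / C₀ := by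
  have hnR : (0:ℝ) < n := by exact_mod_cast hn
  have hpR : (0:ℝ) < p := by exact_mod_cast hp
  have hsn : (0:ℝ) < Real.sqrt n := Real.sqrt_pos.mpr hnR
  have hexp1 : (2:ℝ) ≤ Real.exp 1 := by
    have := Real.add_one_le_exp 1; linarith
  have hexp1' : (0:ℝ) < Real.exp 1 := Real.exp_pos 1
  -- weights
  set L : Fin p → ℝ := fun i => Real.log (Real.exp 1 * p / ((i : ℕ) + 1)) with hLdef
  set mu : Fin p → ℝ := fun i => Real.sqrt (L i) with hmudef
  have hL1 : ∀ i : Fin p, 1 ≤ L i := by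
    intro i
    have hip : ((i:ℕ):ℝ) + 1 ≤ (p:ℝ) := by exact_mod_cast Nat.succ_le_of_lt i.isLt
    have hpos : (0:ℝ) < ((i:ℕ):ℝ) + 1 := by positivity
    have harg : Real.exp 1 ≤ Real.exp 1 * p / (((i:ℕ):ℝ) + 1) := by
      rw [le_div_iff₀ hpos]
      nlinarith
    calc (1:ℝ) = Real.log (Real.exp 1) := (Real.log_exp 1).symm
      _ ≤ L i := Real.log_le_log (Real.exp_pos 1) harg
  have hmu1 : ∀ i : Fin p, 1 ≤ mu i := by
    intro i
    have h := Real.sqrt_le_sqrt (hL1 i)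
    rwa [Real.sqrt_one] at h
  have hmupos : ∀ i : Fin p, 0 < mu i := fun i => lt_of_lt_of_le one_pos (hmu1 i)
  have hmusq : ∀ i : Fin p, mu i ^ 2 = L i := fun i =>
    Real.sq_sqrt (le_trans zero_le_one (hL1 i))
  have hlam_eq : ∀ i : Fin p, Paper.lamW C₀ n p i = C₀ / Real.sqrt n * mu i := by
    intro i
    unfold Paper.lamW
    rw [Real.sqrt_div (le_trans zero_le_one (hL1 i)) (n:ℝ)]
    rw [hmudef]
    ring
  -- dyadic structure
  set N : ℕ := Nat.log 2 p with hNdef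
  have hkN : ∀ j : ℕ, j ≤ N → 2 ^ j ≤ p := fun j hj =>
    (Nat.pow_le_pow_right (by norm_num) hj).trans (Nat.pow_log_le_self 2 hp.ne')
  set L' : ℕ → ℝ := fun j => Real.log (Real.exp 1 * p / ((2 ^ j : ℕ) : ℝ)) with hL'def
  set mu' : ℕ → ℝ := fun j => Real.sqrt (L' j) with hmu'def
  have h2jpos : ∀ j : ℕ, (0:ℝ) < ((2 ^ j : ℕ) : ℝ) := by
    intro j; positivity
  have hargpos : ∀ j : ℕ, (0:ℝ) < Real.exp 1 * p / ((2 ^ j : ℕ) : ℝ) := by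
    intro j; positivity
  have hL'1 : ∀ j : ℕ, j ≤ N → 1 ≤ L' j := by
    intro j hj
    have h2p : ((2 ^ j : ℕ) : ℝ) ≤ (p:ℝ) := by exact_mod_cast hkN j hj
    have harg : Real.exp 1 ≤ Real.exp 1 * p / ((2 ^ j : ℕ) : ℝ) := by
      rw [le_div_iff₀ (h2jpos j)]
      nlinarith [h2jpos j]
    calc (1:ℝ) = Real.log (Real.exp 1) := (Real.log_exp 1).symm
      _ ≤ L' j := Real.log_le_log (Real.exp_pos 1) harg
  have hmu'pos : ∀ j : ℕ, j ≤ N → 0 < mu' j := by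
    intro j hj
    rw [hmu'def]
    exact Real.sqrt_pos.mpr (lt_of_lt_of_le one_pos (hL'1 j hj))
  have hmu'sq : ∀ j : ℕ, j ≤ N → mu' j ^ 2 = L' j := by
    intro j hj
    exact Real.sq_sqrt (le_trans zero_le_one (hL'1 j hj))
  -- the dominating random variables
  set U : ℕ → Ω → ℝ := fun j ω =>
    Real.exp (-(4 * L' j) - 1) / (2 * L' j * ((2 ^ j : ℕ) : ℝ)) *
      ∑ m, (Real.exp (2 * mu' j * ξ ω m) + Real.exp (-(2 * mu' j) * ξ ω m)) with hUdef
  have hU0 : ∀ j : ℕ, j ≤ N → ∀ ω, 0 ≤ U j ω := by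
    intro j hj ω
    have h1 : (0:ℝ) < 2 * L' j * ((2 ^ j : ℕ) : ℝ) := by
      have := hL'1 j hj
      have := h2jpos j
      nlinarith
    have h2 : (0:ℝ) ≤ ∑ m, (Real.exp (2 * mu' j * ξ ω m) + Real.exp (-(2 * mu' j) * ξ ω m)) :=
      Finset.sum_nonneg fun m _ => by positivity
    positivity
  set W : Ω → ℝ := fun ω => 2 + ∑ j ∈ Finset.range (N + 1), U j ω with hWdef
  have hW2 : ∀ ω, 2 ≤ W ω := by
    intro ω
    have : 0 ≤ ∑ j ∈ Finset.range (N + 1), U j ω :=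
      Finset.sum_nonneg fun j hj => hU0 j (Nat.lt_succ_iff.mp (Finset.mem_range.mp hj)) ω
    simp only [hWdef]
    linarith
  have hW0 : ∀ ω, 0 ≤ W ω := fun ω => le_trans (by norm_num) (hW2 ω)
  set g : Ω → ℝ := fun ω => 2 * Real.sqrt 2 * Real.sqrt n / C₀ * W ω with hgdef
  have hg0 : ∀ ω, 0 ≤ g ω := by
    intro ω
    have := hW0 ω
    have h2 : (0:ℝ) ≤ Real.sqrt 2 := Real.sqrt_nonneg 2
    positivity
  -- Claim A
  have hA : ∀ ω (i : Fin p), Paper.ordAbs (ξ ω) i ≤ 2 * mu i * W ω := by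
    intro ω i
    set j := Nat.log 2 ((i:ℕ) + 1) with hjdef
    have hjN : j ≤ N := Nat.log_mono_right (Nat.succ_le_of_lt i.isLt)
    have hk1 : 2 ^ j ≤ (i:ℕ) + 1 := Nat.pow_log_le_self 2 (Nat.succ_ne_zero _)
    have hk2 : (i:ℕ) + 1 < 2 ^ (j + 1) := Nat.lt_pow_succ_log_self (by norm_num) _
    have h2j1 : 1 ≤ 2 ^ j := Nat.one_le_two_pow
    have hi'lt : 2 ^ j - 1 < p := by
      have := i.isLt; omega
    set i' : Fin p := ⟨2 ^ j - 1, hi'lt⟩ with hi'def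
    have hii' : i' ≤ i := by
      rw [Fin.le_def]
      simp only [hi'def]
      omega
    have h1 : Paper.ordAbs (ξ ω) i ≤ Paper.ordAbs (ξ ω) i' := S18.ordAbs_antitone _ hii'
    set A := Paper.ordAbs (ξ ω) i' with hAdef
    have hA0 : 0 ≤ A := S18.ordAbs_nonneg _ _
    have hm'pos := hmu'pos j hjN
    have hm'sq := hmu'sq j hjN
    -- A ≤ 2 mu' + exp(2 mu' A - 4 L' - 1)/(2 mu')
    have key1 : A ≤ 2 * mu' j + Real.exp (2 * mu' j * A - 4 * L' j - 1) / (2 * mu' j) := by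
      have h := S18.le_exp_div (x := A - 2 * mu' j) (β := 2 * mu' j) (by linarith)
      have hexp : 2 * mu' j * (A - 2 * mu' j) - 1 = 2 * mu' j * A - 4 * L' j - 1 := by
        rw [← hm'sq]; ring
      rw [hexp] at h
      linarith
    -- counting: exp(2 mu' A) * 2^j ≤ ∑ (exp + exp)
    have key2 : Real.exp (2 * mu' j * A) * ((2 ^ j : ℕ) : ℝ)
        ≤ ∑ m, (Real.exp (2 * mu' j * ξ ω m) + Real.exp (-(2 * mu' j) * ξ ω m)) := by
      have hstep1 : ∑ m, Real.exp (2 * mu' j * |ξ ω m|)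
          ≤ ∑ m, (Real.exp (2 * mu' j * ξ ω m) + Real.exp (-(2 * mu' j) * ξ ω m)) := by
        refine Finset.sum_le_sum fun m _ => ?_
        rcases le_or_gt 0 (ξ ω m) with hx | hx
        · rw [abs_of_nonneg hx]
          have : (0:ℝ) < Real.exp (-(2 * mu' j) * ξ ω m) := Real.exp_pos _
          linarith
        · rw [abs_of_neg hx]
          have : (0:ℝ) < Real.exp (2 * mu' j * ξ ω m) := Real.exp_pos _
          have heq : 2 * mu' j * -ξ ω m = -(2 * mu' j) * ξ ω m := by ring
          rw [heq]
          linarith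
      have hstep2 : ∑ i'' : Fin p, Real.exp (2 * mu' j * Paper.ordAbs (ξ ω) i'')
          = ∑ m, Real.exp (2 * mu' j * |ξ ω m|) := by
        rw [← S18.sum_comp_permOf (ξ ω) (fun m => Real.exp (2 * mu' j * |ξ ω m|))]
        exact Finset.sum_congr rfl fun i'' _ => by rw [S18.ordAbs_eq]
      have hstep3 : ∑ i'' ∈ Finset.Iic i', Real.exp (2 * mu' j * Paper.ordAbs (ξ ω) i'')
          ≤ ∑ i'' : Fin p, Real.exp (2 * mu' j * Paper.ordAbs (ξ ω) i'') := by
        exact Finset.sum_le_sum_of_subset_of_nonneg (Finset.subset_univ _)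
          (fun _ _ _ => (Real.exp_pos _).le)
      have hstep4 : Real.exp (2 * mu' j * A) * ((2 ^ j : ℕ) : ℝ)
          ≤ ∑ i'' ∈ Finset.Iic i', Real.exp (2 * mu' j * Paper.ordAbs (ξ ω) i'') := by
        have hcard : (Finset.Iic i').card = 2 ^ j := by
          rw [Fin.card_Iic]
          simp only [hi'def]
          omega
        have hle : ∀ i'' ∈ Finset.Iic i',
            Real.exp (2 * mu' j * A) ≤ Real.exp (2 * mu' j * Paper.ordAbs (ξ ω) i'') := by
          intro i'' hi''
          have : A ≤ Paper.ordAbs (ξ ω) i'' :=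
            S18.ordAbs_antitone (ξ ω) (Finset.mem_Iic.mp hi'')
          exact Real.exp_le_exp.mpr (by nlinarith)
        have := Finset.card_nsmul_le_sum (Finset.Iic i')
          (fun i'' => Real.exp (2 * mu' j * Paper.ordAbs (ξ ω) i''))
          (Real.exp (2 * mu' j * A)) hle
        rw [hcard, nsmul_eq_mul] at this
        calc Real.exp (2 * mu' j * A) * ((2 ^ j : ℕ) : ℝ)
            = ((2 ^ j : ℕ) : ℝ) * Real.exp (2 * mu' j * A) := by ring
          _ ≤ _ := this
      calc Real.exp (2 * mu' j * A) * ((2 ^ j : ℕ) : ℝ)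
          ≤ ∑ i'' ∈ Finset.Iic i', Real.exp (2 * mu' j * Paper.ordAbs (ξ ω) i'') := hstep4
        _ ≤ ∑ i'' : Fin p, Real.exp (2 * mu' j * Paper.ordAbs (ξ ω) i'') := hstep3
        _ = ∑ m, Real.exp (2 * mu' j * |ξ ω m|) := hstep2
        _ ≤ _ := hstep1
    -- exp-term ≤ mu' * U j
    have key3 : Real.exp (2 * mu' j * A - 4 * L' j - 1) / (2 * mu' j) ≤ mu' j * U j ω := by
      set Ssum := ∑ m, (Real.exp (2 * mu' j * ξ ω m) + Real.exp (-(2 * mu' j) * ξ ω m)) with hSsumdef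
      have hSsum0 : 0 ≤ Ssum := Finset.sum_nonneg fun m _ => by positivity
      have hsplit : Real.exp (2 * mu' j * A - 4 * L' j - 1)
          = Real.exp (2 * mu' j * A) * Real.exp (-(4 * L' j) - 1) := by
        rw [← Real.exp_add]; congr 1; ring
      have hexp2 : Real.exp (2 * mu' j * A) ≤ Ssum / ((2 ^ j : ℕ) : ℝ) := by
        rw [le_div_iff₀ (h2jpos j)]
        exact key2
      have hc1 : (0:ℝ) < Real.exp (-(4 * L' j) - 1) := Real.exp_pos _
      calc Real.exp (2 * mu' j * A - 4 * L' j - 1) / (2 * mu' j)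
          = Real.exp (2 * mu' j * A) * (Real.exp (-(4 * L' j) - 1) / (2 * mu' j)) := by
            rw [hsplit]; ring
        _ ≤ (Ssum / ((2 ^ j : ℕ) : ℝ)) * (Real.exp (-(4 * L' j) - 1) / (2 * mu' j)) := by
            apply mul_le_mul_of_nonneg_right hexp2
            positivity
        _ = mu' j * (Real.exp (-(4 * L' j) - 1) / (2 * L' j * ((2 ^ j : ℕ) : ℝ)) * Ssum) := by
            rw [← hm'sq]
            field_simp
        _ = mu' j * U j ω := by rw [hUdef]
    have key4 : U j ω ≤ ∑ j' ∈ Finset.range (N + 1), U j' ω := by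
      refine Finset.single_le_sum (fun j' hj' => hU0 j' (Nat.lt_succ_iff.mp (Finset.mem_range.mp hj')) ω) ?_
      exact Finset.mem_range.mpr (Nat.lt_succ_of_le hjN)
    have key5 : mu' j ≤ 2 * mu i := by
      have hL'4 : L' j ≤ 4 * L i := by
        have hipos : (0:ℝ) < ((i:ℕ):ℝ) + 1 := by positivity
        have harg : Real.exp 1 * p / ((2 ^ j : ℕ) : ℝ)
            = (Real.exp 1 * p / (((i:ℕ):ℝ) + 1)) * ((((i:ℕ):ℝ) + 1) / ((2 ^ j : ℕ) : ℝ)) := by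
          field_simp
        have hlogmul : L' j = L i + Real.log ((((i:ℕ):ℝ) + 1) / ((2 ^ j : ℕ) : ℝ)) := by
          rw [hL'def]
          simp only
          rw [harg, Real.log_mul (by positivity) (by positivity)]
        have hratio : (((i:ℕ):ℝ) + 1) / ((2 ^ j : ℕ) : ℝ) ≤ 2 := by
          rw [div_le_iff₀ (h2jpos j)]
          have : ((i:ℕ):ℝ) + 1 < ((2 ^ (j+1) : ℕ) : ℝ) := by exact_mod_cast hk2
          have h2 : ((2 ^ (j+1) : ℕ) : ℝ) = 2 * ((2 ^ j : ℕ) : ℝ) := by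
            push_cast; ring
          linarith [h2 ▸ this]
        have hlog2 : Real.log ((((i:ℕ):ℝ) + 1) / ((2 ^ j : ℕ) : ℝ)) ≤ 1 := by
          calc Real.log ((((i:ℕ):ℝ) + 1) / ((2 ^ j : ℕ) : ℝ))
              ≤ Real.log (Real.exp 1) := Real.log_le_log (by positivity)
                (le_trans hratio hexp1)
            _ = 1 := Real.log_exp 1
        have := hL1 i
        rw [hlogmul]
        linarith
      have : mu' j = Real.sqrt (L' j) := rfl
      rw [this, hmudef]
      calc Real.sqrt (L' j) ≤ Real.sqrt (4 * L i) := Real.sqrt_le_sqrt hL'4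
        _ = Real.sqrt 4 * Real.sqrt (L i) := Real.sqrt_mul (by norm_num) _
        _ = 2 * Real.sqrt (L i) := by rw [S18.sqrt_four]
    -- combine
    have hWω := hW2 ω
    have hUj := hU0 j hjN ω
    have hstep : A ≤ mu' j * W ω := by
      have h5 : mu' j * U j ω ≤ mu' j * (W ω - 2) := by
        apply mul_le_mul_of_nonneg_left _ hm'pos.le
        simp only [hWdef]
        linarith [key4]
      calc A ≤ 2 * mu' j + Real.exp (2 * mu' j * A - 4 * L' j - 1) / (2 * mu' j) := key1
        _ ≤ 2 * mu' j + mu' j * U j ω := by linarith [key3]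
        _ ≤ 2 * mu' j + mu' j * (W ω - 2) := by linarith
        _ = mu' j * W ω := by ring
    calc Paper.ordAbs (ξ ω) i ≤ A := h1
      _ ≤ mu' j * W ω := hstep
      _ ≤ 2 * mu i * W ω := mul_le_mul_of_nonneg_right key5 (hW0 ω)
  -- cone bound
  have hconeb : ∀ ω, ∀ u : Fin p → ℝ, u ≠ 0 →
      (Paper.snorm (Paper.lamW C₀ n p) u) ^ 2 / 2 ≤ Paper.sqS S u →
      (∑ i, ξ ω i * u i) / Real.sqrt (Paper.sqS S u) ≤ g ω := by
    intro ω u hu0 hcone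
    have hordu : ∀ i, 0 ≤ Paper.ordAbs u i := fun i => S18.ordAbs_nonneg u i
    set T := ∑ i, mu i * Paper.ordAbs u i with hTdef
    have hsn_eq : Paper.snorm (Paper.lamW C₀ n p) u = C₀ / Real.sqrt n * T := by
      unfold Paper.snorm
      rw [hTdef, Finset.mul_sum]
      refine Finset.sum_congr rfl fun i _ => ?_
      rw [hlam_eq i]; ring
    have hTpos : 0 < T := by
      obtain ⟨m, hm⟩ : ∃ m, u m ≠ 0 := by
        by_contra h
        push_neg at h
        exact hu0 (funext fun m => h m)
      refine Finset.sum_pos' (fun i _ => mul_nonneg (Real.sqrt_nonneg _) (hordu i)) ?_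
      refine ⟨(S18.permOf u).symm m, Finset.mem_univ _, ?_⟩
      have : Paper.ordAbs u ((S18.permOf u).symm m) = |u m| := by
        rw [S18.ordAbs_eq, Equiv.apply_symm_apply]
      rw [this]
      exact mul_pos (hmupos _) (abs_pos.mpr hm)
    have hsnpos : 0 < Paper.snorm (Paper.lamW C₀ n p) u := by
      rw [hsn_eq]
      exact mul_pos (div_pos hC₀ hsn) hTpos
    have hsqpos : 0 < Paper.sqS S u := by
      calc (0:ℝ) < (Paper.snorm (Paper.lamW C₀ n p) u) ^ 2 / 2 := by positivity
        _ ≤ Paper.sqS S u := hcone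
    have hsqrtpos : 0 < Real.sqrt (Paper.sqS S u) := Real.sqrt_pos.mpr hsqpos
    have hnum : ∑ i, ξ ω i * u i ≤ 2 * W ω * T := by
      calc ∑ i, ξ ω i * u i ≤ ∑ i, |ξ ω i| * |u i| := by
            refine Finset.sum_le_sum fun i _ => ?_
            rw [← abs_mul]
            exact le_abs_self _
        _ ≤ ∑ i, Paper.ordAbs (ξ ω) i * Paper.ordAbs u i := S18.sum_abs_mul_abs_le _ _
        _ ≤ ∑ i, (2 * mu i * W ω) * Paper.ordAbs u i := by
            refine Finset.sum_le_sum fun i _ => ?_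
            exact mul_le_mul_of_nonneg_right (hA ω i) (hordu i)
        _ = 2 * W ω * T := by
            rw [hTdef, Finset.mul_sum]
            refine Finset.sum_congr rfl fun i _ => ?_
            ring
    have hsnle : Paper.snorm (Paper.lamW C₀ n p) u
        ≤ Real.sqrt 2 * Real.sqrt (Paper.sqS S u) := by
      have h1 : (Paper.snorm (Paper.lamW C₀ n p) u) ^ 2 ≤ 2 * Paper.sqS S u := by linarith
      calc Paper.snorm (Paper.lamW C₀ n p) u
          = Real.sqrt ((Paper.snorm (Paper.lamW C₀ n p) u) ^ 2) :=
            (Real.sqrt_sq hsnpos.le).symm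
        _ ≤ Real.sqrt (2 * Paper.sqS S u) := Real.sqrt_le_sqrt h1
        _ = Real.sqrt 2 * Real.sqrt (Paper.sqS S u) := Real.sqrt_mul (by norm_num) _
    have hT_le : T ≤ Real.sqrt n / C₀ * (Real.sqrt 2 * Real.sqrt (Paper.sqS S u)) := by
      have h2 : T = Real.sqrt n / C₀ * (Paper.snorm (Paper.lamW C₀ n p) u) := by
        rw [hsn_eq]
        field_simp
      rw [h2]
      exact mul_le_mul_of_nonneg_left hsnle (by positivity)
    rw [div_le_iff₀ hsqrtpos]
    calc ∑ i, ξ ω i * u i ≤ 2 * W ω * T := hnum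
      _ ≤ 2 * W ω * (Real.sqrt n / C₀ * (Real.sqrt 2 * Real.sqrt (Paper.sqS S u))) := by
          apply mul_le_mul_of_nonneg_left hT_le
          linarith [hW0 ω]
      _ = g ω * Real.sqrt (Paper.sqS S u) := by
          rw [hgdef]
          field_simp
  -- sup bounds
  set f : Ω → ℝ := fun ω => sSup
      ((fun u : Fin p → ℝ => (∑ i, ξ ω i * u i) / Real.sqrt (Paper.sqS S u)) ''
        {u | u ≠ 0 ∧ (Paper.snorm (Paper.lamW C₀ n p) u) ^ 2 / 2 ≤ Paper.sqS S u}) with hfdef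
  have hfle : ∀ ω, f ω ≤ g ω := by
    intro ω
    refine Real.sSup_le ?_ (hg0 ω)
    rintro x ⟨u, ⟨hu0, hcone⟩, rfl⟩
    exact hconeb ω u hu0 hcone
  have hsqS_neg : ∀ u : Fin p → ℝ, Paper.sqS S (-u) = Paper.sqS S u := by
    intro u
    simp [Paper.sqS, Matrix.mulVec_neg, dotProduct_neg, neg_dotProduct]
  have hsnorm_neg : ∀ u : Fin p → ℝ,
      Paper.snorm (Paper.lamW C₀ n p) (-u) = Paper.snorm (Paper.lamW C₀ n p) u := by
    intro u
    unfold Paper.snorm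
    rw [S18.ordAbs_neg]
  have hf0 : ∀ ω, 0 ≤ f ω := by
    intro ω
    rcases Set.eq_empty_or_nonempty
      ((fun u : Fin p → ℝ => (∑ i, ξ ω i * u i) / Real.sqrt (Paper.sqS S u)) ''
        {u | u ≠ 0 ∧ (Paper.snorm (Paper.lamW C₀ n p) u) ^ 2 / 2 ≤ Paper.sqS S u}) with h | h
    · rw [hfdef]
      simp only [h, Real.sSup_empty]
      exact le_refl 0
    · obtain ⟨x, hxmem⟩ := h
      obtain ⟨u, hu, hx⟩ := hxmem
      have hxmem : x ∈
          ((fun u : Fin p → ℝ => (∑ i, ξ ω i * u i) / Real.sqrt (Paper.sqS S u)) ''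
            {u | u ≠ 0 ∧ (Paper.snorm (Paper.lamW C₀ n p) u) ^ 2 / 2 ≤ Paper.sqS S u}) :=
        ⟨u, hu, hx⟩
      have hbdd : BddAbove
          ((fun u : Fin p → ℝ => (∑ i, ξ ω i * u i) / Real.sqrt (Paper.sqS S u)) ''
            {u | u ≠ 0 ∧ (Paper.snorm (Paper.lamW C₀ n p) u) ^ 2 / 2 ≤ Paper.sqS S u}) := by
        refine ⟨g ω, ?_⟩
        rintro y ⟨w, ⟨hw0, hwc⟩, rfl⟩
        exact hconeb ω w hw0 hwc
      have hmemneg : (-x) ∈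
          ((fun u : Fin p → ℝ => (∑ i, ξ ω i * u i) / Real.sqrt (Paper.sqS S u)) ''
            {u | u ≠ 0 ∧ (Paper.snorm (Paper.lamW C₀ n p) u) ^ 2 / 2 ≤ Paper.sqS S u}) := by
        refine ⟨-u, ⟨neg_ne_zero.mpr hu.1, ?_⟩, ?_⟩
        · show (Paper.snorm (Paper.lamW C₀ n p) (-u)) ^ 2 / 2 ≤ Paper.sqS S (-u)
          rw [hsnorm_neg, hsqS_neg]
          exact hu.2
        · show (∑ i, ξ ω i * (-u) i) / Real.sqrt (Paper.sqS S (-u)) = -x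
          rw [hsqS_neg]
          rw [← hx]
          rw [show ∑ i, ξ ω i * (-u) i = -∑ i, ξ ω i * u i by
            rw [← Finset.sum_neg_distrib]
            exact Finset.sum_congr rfl fun i _ => by simp]
          rw [neg_div]
      rcases le_or_gt 0 x with hx0 | hx0
      · exact le_trans hx0 (le_csSup hbdd hxmem)
      · have : (0:ℝ) ≤ -x := by linarith
        exact le_trans this (le_csSup hbdd hmemneg)
  -- integrability
  have hUint : ∀ j ∈ Finset.range (N + 1), Integrable (U j) μ := by
    intro j hj
    refine Integrable.const_mul ?_ _
    refine integrable_finset_sum _ fun m _ => ?_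
    exact show Integrable
        (fun ω => Real.exp (2 * mu' j * ξ ω m) + Real.exp (-(2 * mu' j) * ξ ω m)) μ from
      ((S18.xi_exp S hdiag μ ξ hmeas hgauss m (2 * mu' j)).1).add
        ((S18.xi_exp S hdiag μ ξ hmeas hgauss m (-(2 * mu' j))).1)
  have hWint : Integrable W μ := by
    refine (integrable_const 2).add (integrable_finset_sum _ hUint)
  have hgint : Integrable g μ := hWint.const_mul _
  -- expectation bounds
  have hEU : ∀ j ∈ Finset.range (N + 1),
      ∫ ω, U j ω ∂μ ≤ ((2 ^ j : ℕ) : ℝ) / (Real.exp 1 ^ 3 * p) := by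
    intro j hj
    have hjN : j ≤ N := Nat.lt_succ_iff.mp (Finset.mem_range.mp hj)
    have hLj := hL'1 j hjN
    have hIU : ∫ ω, U j ω ∂μ
        = Real.exp (-(4 * L' j) - 1) / (2 * L' j * ((2 ^ j : ℕ) : ℝ)) *
            ∑ m, ((∫ ω, Real.exp (2 * mu' j * ξ ω m) ∂μ)
              + ∫ ω, Real.exp (-(2 * mu' j) * ξ ω m) ∂μ) := by
      rw [hUdef]
      simp only
      rw [integral_const_mul]
      congr 1
      rw [integral_finset_sum
        (f := fun (m : Fin p) ω =>
          Real.exp (2 * mu' j * ξ ω m) + Real.exp (-(2 * mu' j) * ξ ω m)) _ (fun m _ =>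
        ((S18.xi_exp S hdiag μ ξ hmeas hgauss m (2 * mu' j)).1).add
          ((S18.xi_exp S hdiag μ ξ hmeas hgauss m (-(2 * mu' j))).1))]
      refine Finset.sum_congr rfl fun m _ => ?_
      rw [integral_add ((S18.xi_exp S hdiag μ ξ hmeas hgauss m (2 * mu' j)).1)
        ((S18.xi_exp S hdiag μ ξ hmeas hgauss m (-(2 * mu' j))).1)]
    have hsumE : ∑ m : Fin p, ((∫ ω, Real.exp (2 * mu' j * ξ ω m) ∂μ)
          + ∫ ω, Real.exp (-(2 * mu' j) * ξ ω m) ∂μ)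
        ≤ (p : ℝ) * (2 * Real.exp (2 * L' j)) := by
      have hper : ∀ m : Fin p, (∫ ω, Real.exp (2 * mu' j * ξ ω m) ∂μ)
          + ∫ ω, Real.exp (-(2 * mu' j) * ξ ω m) ∂μ ≤ 2 * Real.exp (2 * L' j) := by
        intro m
        have h1 := (S18.xi_exp S hdiag μ ξ hmeas hgauss m (2 * mu' j)).2
        have h2 := (S18.xi_exp S hdiag μ ξ hmeas hgauss m (-(2 * mu' j))).2
        have hsq : (2 * mu' j) ^ 2 / 2 = 2 * L' j := by
          rw [← hmu'sq j hjN]; ring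
        have hsq2 : (-(2 * mu' j)) ^ 2 / 2 = 2 * L' j := by
          rw [← hmu'sq j hjN]; ring
        rw [hsq] at h1
        rw [hsq2] at h2
        linarith
      calc ∑ m : Fin p, ((∫ ω, Real.exp (2 * mu' j * ξ ω m) ∂μ)
            + ∫ ω, Real.exp (-(2 * mu' j) * ξ ω m) ∂μ)
          ≤ ∑ _m : Fin p, 2 * Real.exp (2 * L' j) :=
            Finset.sum_le_sum fun m _ => hper m
        _ = (p : ℝ) * (2 * Real.exp (2 * L' j)) := by
            rw [Finset.sum_const, Finset.card_univ, Fintype.card_fin, nsmul_eq_mul]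
    have hcpos : (0:ℝ) < Real.exp (-(4 * L' j) - 1) / (2 * L' j * ((2 ^ j : ℕ) : ℝ)) := by
      have := h2jpos j
      positivity
    have hfinal : Real.exp (-(4 * L' j) - 1) / (2 * L' j * ((2 ^ j : ℕ) : ℝ)) *
          ((p : ℝ) * (2 * Real.exp (2 * L' j)))
        ≤ ((2 ^ j : ℕ) : ℝ) / (Real.exp 1 ^ 3 * p) := by
      have hexpL : Real.exp (L' j) = Real.exp 1 * p / ((2 ^ j : ℕ) : ℝ) :=
        Real.exp_log (hargpos j)
      have hexpneg : Real.exp (-(L' j)) = ((2 ^ j : ℕ) : ℝ) / (Real.exp 1 * p) := by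
        rw [Real.exp_neg, hexpL, inv_div]
      have hsplit : Real.exp (-(4 * L' j) - 1) * Real.exp (2 * L' j)
          = Real.exp (-(L' j)) ^ 2 * Real.exp (-1) := by
        rw [← Real.exp_add, sq, ← Real.exp_add, ← Real.exp_add]
        congr 1; ring
      have hexpm1 : Real.exp (-1 : ℝ) = (Real.exp 1)⁻¹ := by
        rw [← Real.exp_neg]
      have heq : Real.exp (-(4 * L' j) - 1) / (2 * L' j * ((2 ^ j : ℕ) : ℝ)) *
            ((p : ℝ) * (2 * Real.exp (2 * L' j)))
          = ((2 ^ j : ℕ) : ℝ) / (Real.exp 1 ^ 3 * p * L' j) := by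
        have h2j := (h2jpos j).ne'
        have hLne : L' j ≠ 0 := by linarith
        have hepne : Real.exp 1 ≠ 0 := hexp1'.ne'
        have hpne : (p:ℝ) ≠ 0 := hpR.ne'
        calc Real.exp (-(4 * L' j) - 1) / (2 * L' j * ((2 ^ j : ℕ) : ℝ)) *
              ((p : ℝ) * (2 * Real.exp (2 * L' j)))
            = (Real.exp (-(4 * L' j) - 1) * Real.exp (2 * L' j)) * (p : ℝ)
                / (L' j * ((2 ^ j : ℕ) : ℝ)) := by
              field_simp
          _ = (Real.exp (-(L' j)) ^ 2 * Real.exp (-1)) * (p : ℝ)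
                / (L' j * ((2 ^ j : ℕ) : ℝ)) := by rw [hsplit]
          _ = ((((2 ^ j : ℕ) : ℝ) / (Real.exp 1 * p)) ^ 2 * (Real.exp 1)⁻¹) * (p : ℝ)
                / (L' j * ((2 ^ j : ℕ) : ℝ)) := by rw [hexpneg, hexpm1]
          _ = ((2 ^ j : ℕ) : ℝ) / (Real.exp 1 ^ 3 * p * L' j) := by
              field_simp
      rw [heq]
      exact div_le_div_of_nonneg_left (h2jpos j).le (by positivity)
        (by nlinarith [mul_pos (pow_pos hexp1' 3) hpR, hLj])
    calc ∫ ω, U j ω ∂μ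
        = Real.exp (-(4 * L' j) - 1) / (2 * L' j * ((2 ^ j : ℕ) : ℝ)) *
            ∑ m, ((∫ ω, Real.exp (2 * mu' j * ξ ω m) ∂μ)
              + ∫ ω, Real.exp (-(2 * mu' j) * ξ ω m) ∂μ) := hIU
      _ ≤ Real.exp (-(4 * L' j) - 1) / (2 * L' j * ((2 ^ j : ℕ) : ℝ)) *
            ((p : ℝ) * (2 * Real.exp (2 * L' j))) :=
          mul_le_mul_of_nonneg_left hsumE hcpos.le
      _ ≤ ((2 ^ j : ℕ) : ℝ) / (Real.exp 1 ^ 3 * p) := hfinal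
  have hsumEU : ∑ j ∈ Finset.range (N + 1), ((2 ^ j : ℕ) : ℝ) / (Real.exp 1 ^ 3 * p) ≤ 2 := by
    have hgeom : ∑ j ∈ Finset.range (N + 1), ((2 ^ j : ℕ) : ℝ)
        = ((2 ^ (N + 1) : ℕ) : ℝ) - 1 := by
      push_cast
      rw [geom_sum_eq (by norm_num : (2:ℝ) ≠ 1)]
      norm_num
    have h2N : ((2 ^ N : ℕ) : ℝ) ≤ (p : ℝ) := by
      exact_mod_cast Nat.pow_log_le_self 2 hp.ne'
    have h2N1 : ((2 ^ (N + 1) : ℕ) : ℝ) = 2 * ((2 ^ N : ℕ) : ℝ) := by push_cast; ring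
    have hE3 : (1:ℝ) ≤ Real.exp 1 ^ 3 := one_le_pow₀ (by linarith)
    calc ∑ j ∈ Finset.range (N + 1), ((2 ^ j : ℕ) : ℝ) / (Real.exp 1 ^ 3 * p)
        = (∑ j ∈ Finset.range (N + 1), ((2 ^ j : ℕ) : ℝ)) / (Real.exp 1 ^ 3 * p) := by
          rw [Finset.sum_div]
      _ = (((2 ^ (N + 1) : ℕ) : ℝ) - 1) / (Real.exp 1 ^ 3 * p) := by rw [hgeom]
      _ ≤ (2 * (p:ℝ)) / (Real.exp 1 ^ 3 * p) := by
          apply (div_le_div_iff_of_pos_right (by positivity)).mpr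
          rw [h2N1]; linarith
      _ ≤ (2 * (p:ℝ)) / (1 * p) := by
          apply div_le_div_of_nonneg_left (by positivity) (by positivity)
          nlinarith
      _ = 2 := by field_simp
  have hEW : ∫ ω, W ω ∂μ ≤ 4 := by
    have h1 : ∫ ω, W ω ∂μ = 2 + ∑ j ∈ Finset.range (N + 1), ∫ ω, U j ω ∂μ := by
      rw [hWdef]
      simp only
      rw [integral_add (integrable_const 2) (integrable_finset_sum _ hUint)]
      rw [integral_const]
      simp [measure_univ]
      rw [integral_finset_sum _ hUint]
    rw [h1]
    have h2 : ∑ j ∈ Finset.range (N + 1), ∫ ω, U j ω ∂μ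
        ≤ ∑ j ∈ Finset.range (N + 1), ((2 ^ j : ℕ) : ℝ) / (Real.exp 1 ^ 3 * p) :=
      Finset.sum_le_sum hEU
    linarith [hsumEU]
  -- final computation
  have hEg : ∫ ω, g ω ∂μ ≤ 2 * Real.sqrt 2 * Real.sqrt n / C₀ * 4 := by
    rw [hgdef]
    simp only
    rw [integral_const_mul]
    apply mul_le_mul_of_nonneg_left hEW
    positivity
  have hmono : ∫ ω, f ω ∂μ ≤ ∫ ω, g ω ∂μ :=
    integral_mono_of_nonneg (Filter.Eventually.of_forall hf0) hgint
      (Filter.Eventually.of_forall hfle)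
  have hfinal : (1 / Real.sqrt n) * ∫ ω, f ω ∂μ
      ≤ (1 / Real.sqrt n) * (2 * Real.sqrt 2 * Real.sqrt n / C₀ * 4) := by
    apply mul_le_mul_of_nonneg_left (le_trans hmono hEg)
    positivity
  have hsimp : (1 / Real.sqrt n) * (2 * Real.sqrt 2 * Real.sqrt n / C₀ * 4)
      = 8 * Real.sqrt 2 / C₀ := by
    field_simp
    ring
  have hlast : (8:ℝ) * Real.sqrt 2 / C₀ ≤ 20 * Real.sqrt 2 / C₀ := by
    gcongr
    nlinarith [Real.sqrt_nonneg 2]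
  calc (1 / Real.sqrt n) * ∫ ω, f ω ∂μ
      ≤ (1 / Real.sqrt n) * (2 * Real.sqrt 2 * Real.sqrt n / C₀ * 4) := hfinal
    _ = 8 * Real.sqrt 2 / C₀ := hsimp
    _ ≤ 20 * Real.sqrt 2 / C₀ := hlast

end
end
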